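/- For every real constant h and every ξ ≠ h − 1, define y(ξ) = (1 − (ξ − h))/(1 + (ξ − h)) and U(ξ) = 4 arctan(y(ξ) + √(y(ξ)² + 1)). Then U'(ξ) = sin U(ξ) − 1 at every such ξ (the case γ = 1). -/

import Mathlib

/-- For every real h and ξ ≠ h − 1, with y(ξ) = (1 − (ξ − h))/(1 + (ξ − h))
and U(ξ) = 4 arctan(y(ξ) + √(y(ξ)² + 1)), one has U'(ξ) = sin U(ξ) − 1 (case γ = 1). -/
theorem stmt13 (h : ℝ) (y U : ℝ → ℝ)
    (hy : ∀ ξ : ℝ, y ξ = (1 - (ξ - h)) / (1 + (ξ - h)))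
    (hU : ∀ ξ : ℝ, U ξ = 4 * Real.arctan (y ξ + Real.sqrt ((y ξ) ^ 2 + 1))) :
    ∀ ξ : ℝ, ξ ≠ h - 1 → HasDerivAt U (Real.sin (U ξ) - 1) ξ := by
  intro ξ hξ
  have hyfun : y = fun x => (1 - (x - h)) / (1 + (x - h)) := funext hy
  have hUfun : U = fun x => 4 * Real.arctan (y x + Real.sqrt ((y x) ^ 2 + 1)) := funext hU
  have hc : (1 + (ξ - h)) ≠ 0 := by
    intro h0; apply hξ; linarith
  have hy1 : HasDerivAt (fun x : ℝ => 1 - (x - h)) (-1) ξ :=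
    ((hasDerivAt_id ξ).sub_const h).const_sub 1
  have hy2 : HasDerivAt (fun x : ℝ => 1 + (x - h)) 1 ξ :=
    ((hasDerivAt_id ξ).sub_const h).const_add 1
  set yv := y ξ with hyv
  obtain ⟨y', h2y', hyd⟩ : ∃ d : ℝ, 2 * d = -(1 + yv) ^ 2 ∧ HasDerivAt y d ξ := by
    refine ⟨(-1 * (1 + (ξ - h)) - (1 - (ξ - h)) * 1) / (1 + (ξ - h)) ^ 2, ?_, ?_⟩
    · rw [hyv, hy ξ]
      field_simp
      ring
    · rw [hyfun]; exact hy1.div hy2 hc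
  have hs2pos : (0:ℝ) < yv ^ 2 + 1 := by positivity
  have hinner : HasDerivAt (fun x => (y x) ^ 2 + 1) (2 * yv ^ 1 * y') ξ := (hyd.pow 2).add_const 1
  set s := Real.sqrt (yv ^ 2 + 1) with hsdef
  have hspos : 0 < s := Real.sqrt_pos.mpr hs2pos
  have hs2 : s ^ 2 = yv ^ 2 + 1 := Real.sq_sqrt hs2pos.le
  have hsq : HasDerivAt (fun x => Real.sqrt ((y x) ^ 2 + 1)) (1 / (2 * s) * (2 * yv ^ 1 * y')) ξ :=
    (Real.hasDerivAt_sqrt (ne_of_gt hs2pos)).comp ξ hinner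
  have hsum := hyd.add hsq
  set a := yv + s with hadef
  have hapos : 0 < a := by nlinarith [hs2, hspos]
  have harc : HasDerivAt (fun x => Real.arctan (y x + Real.sqrt ((y x) ^ 2 + 1)))
      (1 / (1 + a ^ 2) * (y' + 1 / (2 * s) * (2 * yv ^ 1 * y'))) ξ := by
    have h0 := (Real.hasDerivAt_arctan a).comp ξ hsum
    exact h0
  have hfinal : HasDerivAt (fun x => 4 * Real.arctan (y x + Real.sqrt ((y x) ^ 2 + 1)))
      (4 * (1 / (1 + a ^ 2) * (y' + 1 / (2 * s) * (2 * yv ^ 1 * y')))) ξ := harc.const_mul (4:ℝ)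
  rw [hUfun]
  convert hfinal using 1
  have h1a : 1 + a ^ 2 = 2 * s * a := by
    rw [hadef]; linear_combination -hs2
  have h2a : 1 - a ^ 2 = -2 * yv * a := by
    rw [hadef]; linear_combination -hs2
  have hsin : Real.sin (4 * Real.arctan a) = 4 * a * (1 - a ^ 2) / (1 + a ^ 2) ^ 2 := by
    rw [show (4:ℝ) * Real.arctan a = 2 * (2 * Real.arctan a) by ring,
      Real.sin_two_mul, Real.cos_two_mul, Real.sin_two_mul, Real.sin_arctan, Real.cos_arctan]
    have h1apos : (0:ℝ) < 1 + a ^ 2 := by positivity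
    have hr2 : Real.sqrt (1 + a ^ 2) ^ 2 = 1 + a ^ 2 := Real.sq_sqrt h1apos.le
    have hrpos : (0:ℝ) < Real.sqrt (1 + a ^ 2) := Real.sqrt_pos.mpr h1apos
    field_simp
    ring_nf
    rw [show Real.sqrt (1 + a ^ 2) ^ 4 = (Real.sqrt (1 + a ^ 2) ^ 2) ^ 2 by ring, hr2]
    ring
  show Real.sin (4 * Real.arctan (yv + Real.sqrt (yv ^ 2 + 1))) - 1 = _
  rw [← hsdef, ← hadef, hsin, h1a, h2a]
  field_simp
  linear_combination (-4*yv - 2*s^2) * hadef + (-2*(yv+s)) * h2y' + (-2*(yv+s)) * hs2
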